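/- Let Ω = (0,1), n ≥ 2, φ_n := (n/2)·χ_{[−1/n, 1/n]}, a_0, …, a_n ∈ ℝ, and let f_n := Σ_{i=0}^n a_i g_i be the piecewise linear spline with nodes (k/n, a_k), where g_i(x) := max(1 − n|x − i/n|, 0). Then R_n^1(f_n) = Σ_{i=1}^n |a_i − a_{i−1}|/2 + Σ_{i=1}^{n−1} t(a_{i−1}, a_i, a_{i+1}), where t(a_{i−1}, a_i, a_{i+1}) = |a_{i+1} − a_{i−1}|/4 if sgn(a_{i−1} − a_i) = sgn(a_i − a_{i+1}), and t(a_{i−1}, a_i, a_{i+1}) = ((a_i − a_{i−1})² + (a_i − a_{i+1})²) / (4(|a_i − a_{i−1}| + |a_i − a_{i+1}|)) if sgn(a_{i−1} − a_i) ≠ sgn(a_i − a_{i+1}). -/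

import Mathlib

open MeasureTheory Filter Topology
open scoped ENNReal

/-- The regularization functional on `Ω = (0,1)`:
`R¹_φ(f) = ∫_0^1 ∫_0^1 |f x - f y| / |x - y| · φ(x - y) dx dy`. -/
noncomputable def R1d (φ f : ℝ → ℝ) : ℝ :=
  ∫ x in Set.Ioo (0 : ℝ) 1, ∫ y in Set.Ioo (0 : ℝ) 1, |f x - f y| / |x - y| * φ (x - y)

open intervalIntegral


lemma integral_affine (c d p q : ℝ) :
    ∫ t in p..q, (c + d * t) = c * (q - p) + d * (q ^ 2 - p ^ 2) / 2 := by
  have h1 : IntervalIntegrable (fun _ : ℝ => c) volume p q := intervalIntegrable_const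
  have h2 : IntervalIntegrable (fun t : ℝ => d * t) volume p q :=
    (continuous_const.mul continuous_id).intervalIntegrable _ _
  rw [intervalIntegral.integral_add h1 h2, intervalIntegral.integral_const,
    intervalIntegral.integral_const_mul, integral_id, smul_eq_mul]
  ring

private lemma contabs (x y : ℝ) : Continuous (fun t : ℝ => |x * (1 - t) + y * t|) :=
  ((continuous_const.mul (continuous_const.sub continuous_id)).add
    (continuous_const.mul continuous_id)).abs

private lemma negint (x y : ℝ) :
    (∫ t in (0:ℝ)..1, |x * (1 - t) + y * t|) = ∫ t in (0:ℝ)..1, |(-x) * (1 - t) + (-y) * t| := by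
  apply intervalIntegral.integral_congr
  intro t _
  dsimp only
  rw [show (-x) * (1 - t) + (-y) * t = -(x * (1 - t) + y * t) by ring, abs_neg]

private lemma swapint (x y : ℝ) :
    (∫ t in (0:ℝ)..1, |x * (1 - t) + y * t|) = ∫ t in (0:ℝ)..1, |y * (1 - t) + x * t| := by
  have h := intervalIntegral.integral_comp_sub_left (fun t => |y * (1 - t) + x * t|) 1 (a := 0) (b := 1)
  norm_num at h
  rw [← h]
  apply intervalIntegral.integral_congr
  intro t _
  dsimp only
  ring_nf

private lemma key_nonneg (x y : ℝ) (h : ∀ t ∈ Set.Icc (0:ℝ) 1, 0 ≤ x * (1 - t) + y * t) :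
    (∫ t in (0:ℝ)..1, |x * (1 - t) + y * t|) = (x + y) / 2 := by
  have e : (∫ t in (0:ℝ)..1, |x * (1 - t) + y * t|) = ∫ t in (0:ℝ)..1, (x + (y - x) * t) := by
    apply intervalIntegral.integral_congr
    intro t ht
    rw [Set.uIcc_of_le (by norm_num : (0:ℝ) ≤ 1)] at ht
    dsimp only
    rw [abs_of_nonneg (h t ht)]; ring
  rw [e, integral_affine]; ring

private lemma mixed (x y : ℝ) (hx : 0 < x) (hy : y < 0) :
    (∫ t in (0:ℝ)..1, |x * (1 - t) + y * t|) = (x ^ 2 + y ^ 2) / (2 * (x - y)) := by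
  have hxy : 0 < x - y := by linarith
  set t0 : ℝ := x / (x - y) with ht0
  have ht01 : 0 ≤ t0 := div_nonneg hx.le hxy.le
  have ht02 : t0 ≤ 1 := by rw [div_le_one hxy]; linarith
  have hne : x - y ≠ 0 := ne_of_gt hxy
  have hval : x + (y - x) * t0 = 0 := by rw [ht0]; field_simp; ring
  have hsplit : (∫ t in (0:ℝ)..1, |x * (1 - t) + y * t|) =
      (∫ t in (0:ℝ)..t0, |x * (1 - t) + y * t|) + ∫ t in t0..1, |x * (1 - t) + y * t| := by
    rw [intervalIntegral.integral_add_adjacent_intervals] <;>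
      exact (contabs x y).intervalIntegrable _ _
  have e1 : (∫ t in (0:ℝ)..t0, |x * (1 - t) + y * t|) = ∫ t in (0:ℝ)..t0, (x + (y - x) * t) := by
    apply intervalIntegral.integral_congr
    intro t ht
    rw [Set.uIcc_of_le ht01] at ht
    dsimp only
    have h1 : 0 ≤ x + (y - x) * t := by nlinarith [ht.1, ht.2]
    rw [abs_of_nonneg (by linarith : (0:ℝ) ≤ x * (1 - t) + y * t)]; ring
  have e2 : (∫ t in t0..1, |x * (1 - t) + y * t|) = ∫ t in t0..1, (-x + (x - y) * t) := by
    apply intervalIntegral.integral_congr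
    intro t ht
    rw [Set.uIcc_of_le ht02] at ht
    dsimp only
    have h1 : x + (y - x) * t ≤ 0 := by nlinarith [ht.1, ht.2]
    rw [abs_of_nonpos (by linarith : x * (1 - t) + y * t ≤ 0)]; ring
  rw [hsplit, e1, e2, integral_affine, integral_affine]
  rw [ht0]
  field_simp
  ring

lemma lemC (α β : ℝ) :
    (∫ t in (0:ℝ)..1, |α * (1 - t) + β * t|) =
      if Real.sign α = Real.sign β then |α + β| / 2
      else (α ^ 2 + β ^ 2) / (2 * (|α| + |β|)) := by
  rcases lt_trichotomy α 0 with ha | ha | ha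
  · rcases lt_trichotomy β 0 with hb | hb | hb
    · rw [if_pos (by rw [Real.sign_of_neg ha, Real.sign_of_neg hb])]
      rw [negint, key_nonneg (-α) (-β) (by intro t ht; nlinarith [ht.1, ht.2]),
        abs_of_nonpos (by linarith : α + β ≤ 0)]
      ring
    · subst hb
      rw [if_neg (by rw [Real.sign_of_neg ha, Real.sign_zero]; norm_num)]
      rw [negint, show (-(0:ℝ)) = 0 by ring,
        key_nonneg (-α) 0 (by intro t ht; nlinarith [ht.1, ht.2]),
        abs_of_neg ha, abs_zero]
      have hne : α ≠ 0 := ne_of_lt ha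
      field_simp
      rw [eq_div_iff (by intro h; apply hne; linarith)]; ring
    · rw [if_neg (by rw [Real.sign_of_neg ha, Real.sign_of_pos hb]; norm_num)]
      rw [swapint, mixed β α hb ha, abs_of_neg ha, abs_of_pos hb]
      ring_nf
  · subst ha
    rcases lt_trichotomy β 0 with hb | hb | hb
    · rw [if_neg (by rw [Real.sign_zero, Real.sign_of_neg hb]; norm_num)]
      rw [negint, show (-(0:ℝ)) = 0 by ring,
        key_nonneg 0 (-β) (by intro t ht; nlinarith [ht.1, ht.2]),
        abs_zero, abs_of_neg hb]
      have hne : β ≠ 0 := ne_of_lt hb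
      field_simp
      rw [eq_div_iff (by intro h; apply hne; linarith)]; ring
    · subst hb
      rw [if_pos rfl]
      simp only [zero_mul, add_zero, abs_zero, mul_zero, zero_add]
      simp
    · rw [if_neg (by rw [Real.sign_zero, Real.sign_of_pos hb]; norm_num)]
      rw [key_nonneg 0 β (by intro t ht; nlinarith [ht.1, ht.2]), abs_zero, abs_of_pos hb]
      field_simp
      ring
  · rcases lt_trichotomy β 0 with hb | hb | hb
    · rw [if_neg (by rw [Real.sign_of_pos ha, Real.sign_of_neg hb]; norm_num)]
      rw [mixed α β ha hb, abs_of_pos ha, abs_of_neg hb]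
      ring_nf
    · subst hb
      rw [if_neg (by rw [Real.sign_of_pos ha, Real.sign_zero]; norm_num)]
      rw [key_nonneg α 0 (by intro t ht; nlinarith [ht.1, ht.2]), abs_of_pos ha, abs_zero]
      field_simp
      ring
    · rw [if_pos (by rw [Real.sign_of_pos ha, Real.sign_of_pos hb])]
      rw [key_nonneg α β (by intro t ht; nlinarith [ht.1, ht.2]),
        abs_of_pos (by linarith : (0:ℝ) < α + β)]

lemma fn_eval (n : ℕ) (a : ℕ → ℝ) (k : ℕ) (hk1 : 1 ≤ k) (hkn : k ≤ n) (x : ℝ)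
    (h1 : ((k:ℝ)-1)/n ≤ x) (h2 : x ≤ (k:ℝ)/n) :
    (∑ i ∈ Finset.range (n+1), a i * max (1 - n * |x - (i:ℝ)/n|) 0)
      = a (k-1) + (n:ℝ)*(a k - a (k-1))*(x - ((k:ℝ)-1)/n) := by
  have hn0 : (0:ℝ) < n := by
    have : 1 ≤ n := le_trans hk1 hkn
    exact_mod_cast Nat.lt_of_lt_of_le Nat.zero_lt_one this
  have hxn : (k:ℝ) - 1 ≤ x * n := by
    rw [div_le_iff₀ hn0] at h1; linarith
  have hxn2 : x * n ≤ k := by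
    rw [le_div_iff₀ hn0] at h2; linarith
  have hsub : ({k-1, k} : Finset ℕ) ⊆ Finset.range (n+1) := by
    intro i hi
    simp only [Finset.mem_insert, Finset.mem_singleton] at hi
    rcases hi with h | h <;> simp [Finset.mem_range] <;> omega
  have hzero : ∀ i ∈ Finset.range (n+1), i ∉ ({k-1, k} : Finset ℕ) →
      a i * max (1 - n * |x - (i:ℝ)/n|) 0 = 0 := by
    intro i _ hi
    simp only [Finset.mem_insert, Finset.mem_singleton, not_or] at hi
    have hcase : i + 2 ≤ k ∨ k + 1 ≤ i := by omega
    have habs : (1:ℝ) ≤ n * |x - (i:ℝ)/n| := by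
      rcases hcase with hc | hc
      · have hc' : (i:ℝ) + 2 ≤ k := by exact_mod_cast hc
        have e : (n:ℝ) * (x - (i:ℝ)/n) = x * n - i := by field_simp
        calc (1:ℝ) ≤ n * (x - (i:ℝ)/n) := by rw [e]; linarith
          _ ≤ n * |x - (i:ℝ)/n| := by
              apply mul_le_mul_of_nonneg_left (le_abs_self _) hn0.le
      · have hc' : (k:ℝ) + 1 ≤ i := by exact_mod_cast hc
        have e : (n:ℝ) * ((i:ℝ)/n - x) = (i:ℝ) - x * n := by field_simp
        calc (1:ℝ) ≤ n * ((i:ℝ)/n - x) := by rw [e]; linarith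
          _ ≤ n * |x - (i:ℝ)/n| := by
              rw [abs_sub_comm]
              apply mul_le_mul_of_nonneg_left (le_abs_self _) hn0.le
    rw [max_eq_right (by linarith), mul_zero]
  rw [← Finset.sum_subset hsub hzero]
  have hne : k - 1 ≠ k := by omega
  rw [Finset.sum_insert (by simp [hne]), Finset.sum_singleton]
  have hc1 : ((k-1:ℕ):ℝ) = (k:ℝ) - 1 := by
    push_cast [Nat.cast_sub hk1]; ring
  rw [hc1]
  have e1 : |x - ((k:ℝ)-1)/n| = x - ((k:ℝ)-1)/n := abs_of_nonneg (by linarith)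
  have e2 : |x - (k:ℝ)/n| = (k:ℝ)/n - x := by
    rw [abs_sub_comm]; exact abs_of_nonneg (sub_nonneg.mpr h2)
  rw [e1, e2]
  have f1 : (n:ℝ) * (x - ((k:ℝ)-1)/n) = x * n - ((k:ℝ)-1) := by field_simp
  have f2 : (n:ℝ) * ((k:ℝ)/n - x) = (k:ℝ) - x * n := by field_simp
  rw [max_eq_left (by rw [f1]; linarith), max_eq_left (by rw [f2]; linarith)]
  field_simp
  ring

section pieces
variable {n : ℕ} {a : ℕ → ℝ} {f : ℝ → ℝ} {h : ℝ}

lemma pieceA (hn0 : (0:ℝ) < n)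
    (hf : ∀ k : ℕ, 1 ≤ k → k ≤ n → ∀ x : ℝ, ((k:ℝ)-1)/n ≤ x → x ≤ (k:ℝ)/n →
      f x = a (k-1) + (n:ℝ)*(a k - a (k-1))*(x - ((k:ℝ)-1)/n))
    (hh0 : 0 < h) (hh : h ≤ 1/n) (k : ℕ) (hk1 : 1 ≤ k) (hkn : k ≤ n) :
    ∫ x in (((k:ℝ)-1)/n)..((k:ℝ)/n - h), |f (x+h) - f x| =
      |(n:ℝ)*(a k - a (k-1))| * h * (1/n - h) := by
  have hord : ((k:ℝ)-1)/n ≤ (k:ℝ)/n - h := by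
    have : (k:ℝ)/n - ((k:ℝ)-1)/n = 1/n := by ring
    linarith
  have e : ∫ x in (((k:ℝ)-1)/n)..((k:ℝ)/n - h), |f (x+h) - f x| =
      ∫ _x in (((k:ℝ)-1)/n)..((k:ℝ)/n - h), |(n:ℝ)*(a k - a (k-1))*h| := by
    apply intervalIntegral.integral_congr
    intro x hx
    rw [Set.uIcc_of_le hord] at hx
    dsimp only
    rw [hf k hk1 hkn x hx.1 (by linarith [hx.2]),
        hf k hk1 hkn (x+h) (by linarith [hx.1]) (by linarith [hx.2])]
    congr 1
    ring
  rw [e, intervalIntegral.integral_const, smul_eq_mul, abs_mul, abs_of_pos hh0]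
  ring

lemma pieceB (hn0 : (0:ℝ) < n)
    (hf : ∀ k : ℕ, 1 ≤ k → k ≤ n → ∀ x : ℝ, ((k:ℝ)-1)/n ≤ x → x ≤ (k:ℝ)/n →
      f x = a (k-1) + (n:ℝ)*(a k - a (k-1))*(x - ((k:ℝ)-1)/n))
    (hh0 : 0 < h) (hh : h ≤ 1/n) (k : ℕ) (hk1 : 1 ≤ k) (hkn : k + 1 ≤ n) :
    ∫ x in ((k:ℝ)/n - h)..((k:ℝ)/n), |f (x+h) - f x| =
      h^2 * ∫ t in (0:ℝ)..1,
        |(n:ℝ)*(a k - a (k-1))*(1-t) + (n:ℝ)*(a (k+1) - a k)*t| := by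
  set s1 : ℝ := (n:ℝ)*(a k - a (k-1)) with hs1
  set s2 : ℝ := (n:ℝ)*(a (k+1) - a k) with hs2
  have h1n : ((k:ℝ)-1)/n + 1/n = (k:ℝ)/n := by rw [← add_div]; ring_nf
  have e : ∫ x in ((k:ℝ)/n - h)..((k:ℝ)/n), |f (x+h) - f x| =
      ∫ x in ((k:ℝ)/n - h)..((k:ℝ)/n), |s1*(h - (x - ((k:ℝ)/n - h))) + s2*(x - ((k:ℝ)/n - h))| := by
    apply intervalIntegral.integral_congr
    intro x hx
    rw [Set.uIcc_of_le (by linarith)] at hx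
    dsimp only
    have hfx : f x = a (k-1) + s1*(x - ((k:ℝ)-1)/n) := by
      apply hf k hk1 (by omega) x (by linarith [hx.1]) hx.2
    have hkk : ((k+1:ℕ):ℝ) = (k:ℝ)+1 := by push_cast; ring
    have hb1 : (((k:ℝ)+1)-1)/n = (k:ℝ)/n := by ring_nf
    have hb2 : ((k:ℝ)+1)/n = (k:ℝ)/n + 1/n := by rw [← add_div]
    have hfxh : f (x+h) = a k + s2*(x + h - (k:ℝ)/n) := by
      have h5 := hf (k+1) (by omega) hkn (x+h) (by rw [hkk, hb1]; linarith [hx.1])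
        (by rw [hkk, hb2]; linarith [hx.2])
      rw [h5, hkk, hb1]
      simp only [Nat.add_sub_cancel]
      try rw [hs2]
    rw [hfx, hfxh]
    have hak : a k = a (k-1) + s1 * (1/n) := by
      rw [hs1]; field_simp; ring
    rw [hak]
    congr 1
    have hc : ((k:ℝ)-1)/n = (k:ℝ)/n - 1/n := by rw [div_sub_div_same]
    rw [hc]
    ring
  rw [e]
  have e2 := intervalIntegral.integral_comp_sub_right
    (fun u => |s1*(h - u) + s2*u|) ((k:ℝ)/n - h) (a := (k:ℝ)/n - h) (b := (k:ℝ)/n)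
  simp only [sub_self] at e2
  rw [show (k:ℝ)/n - ((k:ℝ)/n - h) = h by ring] at e2
  rw [e2]
  -- now ∫ u in 0..h, |s1*(h-u) + s2*u| = h^2 * C
  have e3 := intervalIntegral.integral_comp_mul_left
    (fun u => |s1*(h - u) + s2*u|) (ne_of_gt hh0) (a := (0:ℝ)) (b := 1)
  simp only [mul_zero, mul_one, smul_eq_mul] at e3
  have e4 : ∫ t in (0:ℝ)..1, |s1*(h - h*t) + s2*(h*t)| =
      ∫ t in (0:ℝ)..1, h * |s1*(1-t) + s2*t| := by
    apply intervalIntegral.integral_congr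
    intro t _
    dsimp only
    rw [show s1*(h - h*t) + s2*(h*t) = h * (s1*(1-t) + s2*t) by ring, abs_mul,
      abs_of_pos hh0]
  rw [e4, intervalIntegral.integral_const_mul] at e3
  have := e3
  field_simp at this
  rw [← this]
  congr 1; congr 1; funext t; ring_nf
end pieces

lemma G_eval {n : ℕ} {a : ℕ → ℝ} {f : ℝ → ℝ} {h : ℝ} (hn0 : (0:ℝ) < n)
    (hn1 : 1 ≤ n) (hcont : Continuous f)
    (hf : ∀ k : ℕ, 1 ≤ k → k ≤ n → ∀ x : ℝ, ((k:ℝ)-1)/n ≤ x → x ≤ (k:ℝ)/n →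
      f x = a (k-1) + (n:ℝ)*(a k - a (k-1))*(x - ((k:ℝ)-1)/n))
    (hh0 : 0 < h) (hh : h ≤ 1/n) :
    ∫ x in (0:ℝ)..(1-h), |f (x+h) - f x| =
      (∑ k ∈ Finset.Icc 1 n, |(n:ℝ)*(a k - a (k-1))| * h * (1/n - h))
      + ∑ k ∈ Finset.Icc 1 (n-1), h^2 * ∫ t in (0:ℝ)..1,
          |(n:ℝ)*(a k - a (k-1))*(1-t) + (n:ℝ)*(a (k+1) - a k)*t| := by
  have hcont2 : Continuous fun x => |f (x+h) - f x| :=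
    ((hcont.comp (continuous_id.add continuous_const)).sub hcont).abs
  have i1 : ∀ p q : ℝ, IntervalIntegrable (fun x => |f (x+h) - f x|) volume p q :=
    fun p q => hcont2.intervalIntegrable p q
  have key : ∀ m : ℕ, m + 1 ≤ n →
      ∫ x in (0:ℝ)..(((m:ℝ)+1)/n - h), |f (x+h) - f x| =
        (∑ k ∈ Finset.Icc 1 (m+1), |(n:ℝ)*(a k - a (k-1))| * h * (1/n - h))
        + ∑ k ∈ Finset.Icc 1 m, h^2 * ∫ t in (0:ℝ)..1,
            |(n:ℝ)*(a k - a (k-1))*(1-t) + (n:ℝ)*(a (k+1) - a k)*t| := by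
    intro m
    induction m with
    | zero =>
      intro h1n
      have hA := pieceA hn0 hf hh0 hh 1 le_rfl h1n
      norm_num at hA ⊢
      rw [hA]
    | succ m ih =>
      intro hm
      have ihh := ih (by omega)
      have hA := pieceA hn0 hf hh0 hh (m+2) (by omega) (by omega)
      have hB := pieceB hn0 hf hh0 hh (m+1) (by omega) (by omega)
      push_cast at hA hB ⊢
      try simp only [show m+2-1 = m+1 from rfl, show m+1-1 = m from rfl] at hA hB
      rw [show ((m:ℝ)+2) = (m:ℝ)+1+1 by ring] at hA
      rw [show ((m:ℝ)+1+1)-1 = (m:ℝ)+1 by ring] at hA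
      rw [← intervalIntegral.integral_add_adjacent_intervals
            (a := (0:ℝ)) (b := ((m:ℝ)+1)/n - h) (c := ((m:ℝ)+1+1)/n - h) (i1 _ _) (i1 _ _),
          ← intervalIntegral.integral_add_adjacent_intervals
            (a := ((m:ℝ)+1)/n - h) (b := ((m:ℝ)+1)/n) (c := ((m:ℝ)+1+1)/n - h) (i1 _ _) (i1 _ _)]
      rw [Finset.sum_Icc_succ_top (show 1 ≤ m+1+1 by omega),
          Finset.sum_Icc_succ_top (show 1 ≤ m+1 by omega),
          Finset.sum_Icc_succ_top (show 1 ≤ m+1 by omega)]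
      rw [Finset.sum_Icc_succ_top (show 1 ≤ m+1 by omega)] at ihh
      try simp only [show m+1+1-1 = m+1 from rfl, show m+1-1 = m from rfl] at ihh ⊢
      try simp only [show m+1+1 = m+2 from rfl] at ihh hA hB ⊢
      push_cast
      rw [ihh, hA, hB]
      ring
  have hkey := key (n-1) (by omega)
  rw [show n-1+1 = n by omega] at hkey
  rw [Nat.cast_sub hn1, Nat.cast_one] at hkey
  rw [show ((n:ℝ) - 1 + 1) = (n:ℝ) by ring, div_self hn0.ne'] at hkey
  push_cast at hkey
  exact hkey

lemma fn_cont (n : ℕ) (a : ℕ → ℝ) :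
    Continuous (fun x : ℝ => ∑ i ∈ Finset.range (n+1), a i * max (1 - n * |x - (i:ℝ)/n|) 0) := by
  apply continuous_finset_sum
  intro i _
  exact continuous_const.mul
    ((continuous_const.sub (continuous_const.mul ((continuous_id.sub continuous_const).abs))).max
      continuous_const)

lemma fn_lip (n : ℕ) (a : ℕ → ℝ) (x y : ℝ) :
    |(∑ i ∈ Finset.range (n+1), a i * max (1 - n * |x - (i:ℝ)/n|) 0)
      - (∑ i ∈ Finset.range (n+1), a i * max (1 - n * |y - (i:ℝ)/n|) 0)|
      ≤ ((n:ℝ) * ∑ i ∈ Finset.range (n+1), |a i|) * |x - y| := by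
  rw [← Finset.sum_sub_distrib]
  calc |∑ i ∈ Finset.range (n+1),
          (a i * max (1 - n * |x - (i:ℝ)/n|) 0 - a i * max (1 - n * |y - (i:ℝ)/n|) 0)|
      ≤ ∑ i ∈ Finset.range (n+1),
          |a i * max (1 - n * |x - (i:ℝ)/n|) 0 - a i * max (1 - n * |y - (i:ℝ)/n|) 0| :=
        Finset.abs_sum_le_sum_abs _ _
    _ ≤ ∑ i ∈ Finset.range (n+1), |a i| * ((n:ℝ) * |x - y|) := by
        apply Finset.sum_le_sum
        intro i _
        rw [← mul_sub, abs_mul]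
        apply mul_le_mul_of_nonneg_left ?_ (abs_nonneg _)
        calc |max (1 - n * |x - (i:ℝ)/n|) 0 - max (1 - n * |y - (i:ℝ)/n|) 0|
            ≤ |(1 - n * |x - (i:ℝ)/n|) - (1 - n * |y - (i:ℝ)/n|)| :=
              abs_max_sub_max_le_abs _ _ _
          _ = (n:ℝ) * |(|y - (i:ℝ)/n| - |x - (i:ℝ)/n|)| := by
              rw [show (1 - (n:ℝ) * |x - (i:ℝ)/n|) - (1 - (n:ℝ) * |y - (i:ℝ)/n|)
                  = (n:ℝ) * (|y - (i:ℝ)/n| - |x - (i:ℝ)/n|) by ring, abs_mul,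
                Nat.abs_cast]
          _ ≤ (n:ℝ) * |x - y| := by
              apply mul_le_mul_of_nonneg_left ?_ (Nat.cast_nonneg n)
              calc |(|y - (i:ℝ)/n| - |x - (i:ℝ)/n|)| ≤ |(y - (i:ℝ)/n) - (x - (i:ℝ)/n)| :=
                    abs_abs_sub_abs_le_abs_sub _ _
                _ = |x - y| := by rw [show (y - (i:ℝ)/n) - (x - (i:ℝ)/n) = y - x by ring,
                    abs_sub_comm]
    _ = ((n:ℝ) * ∑ i ∈ Finset.range (n+1), |a i|) * |x - y| := by
        rw [← Finset.sum_mul]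
        ring

noncomputable def ind01 : ℝ → ℝ := (Set.Ioo (0:ℝ) 1).indicator (fun _ => 1)

noncomputable def Kf (f φ : ℝ → ℝ) (x h : ℝ) : ℝ :=
  ind01 x * (ind01 (x+h) * (|f x - f (x+h)| / |x - (x+h)| * φ (x - (x+h))))

lemma ind01_nonneg (x : ℝ) : 0 ≤ ind01 x := by
  unfold ind01; exact Set.indicator_nonneg (fun _ _ => zero_le_one) x

lemma ind01_le_one (x : ℝ) : ind01 x ≤ 1 := by
  unfold ind01; by_cases hx : x ∈ Set.Ioo (0:ℝ) 1 <;> simp [Set.indicator_apply, hx]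

lemma ind01_of_mem {x : ℝ} (hx : x ∈ Set.Ioo (0:ℝ) 1) : ind01 x = 1 := by
  unfold ind01; simp [Set.indicator_of_mem hx]

lemma ind01_of_not_mem {x : ℝ} (hx : x ∉ Set.Ioo (0:ℝ) 1) : ind01 x = 0 := by
  unfold ind01; simp [Set.indicator_of_notMem hx]

lemma ind01_meas : Measurable ind01 :=
  Measurable.indicator measurable_const measurableSet_Ioo

lemma reduction (n : ℕ) (hn : 2 ≤ n) (f : ℝ → ℝ) (hcont : Continuous f)
    (L : ℝ) (hL : 0 ≤ L) (hLip : ∀ x y, |f x - f y| ≤ L * |x - y|) :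
    R1d (Set.indicator (Set.Icc (-(1/(n:ℝ))) (1/(n:ℝ))) (fun _ => (n:ℝ)/2)) f
      = 2 * ∫ h in (0:ℝ)..(1/(n:ℝ)),
          ((n:ℝ)/2)/h * ∫ x in (0:ℝ)..(1-h), |f (x+h) - f x| := by
  have hn0 : (0:ℝ) < n := by
    have : (0:ℕ) < n := by omega
    exact_mod_cast this
  have hn2 : (2:ℝ) ≤ n := by exact_mod_cast hn
  have hinv2 : 1/(n:ℝ) ≤ 1/2 := by
    apply div_le_div_of_nonneg_left (by norm_num) (by norm_num) hn2
  have hinv0 : 0 < 1/(n:ℝ) := by positivity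
  set φ : ℝ → ℝ := Set.indicator (Set.Icc (-(1/(n:ℝ))) (1/(n:ℝ))) (fun _ => (n:ℝ)/2) with hφdef
  have hφ_even : ∀ u : ℝ, φ (-u) = φ u := by
    intro u
    have hiff : (-u ∈ Set.Icc (-(1/(n:ℝ))) (1/(n:ℝ))) ↔ (u ∈ Set.Icc (-(1/(n:ℝ))) (1/(n:ℝ))) := by
      simp only [Set.mem_Icc]; constructor <;> intro h <;> constructor <;> linarith [h.1, h.2]
    rw [hφdef]
    by_cases hu : u ∈ Set.Icc (-(1/(n:ℝ))) (1/(n:ℝ))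
    · rw [Set.indicator_of_mem (hiff.mpr hu), Set.indicator_of_mem hu]
    · rw [Set.indicator_of_notMem (fun c => hu (hiff.mp c)), Set.indicator_of_notMem hu]
  have hφ_zero : ∀ u : ℝ, 1/(n:ℝ) < |u| → φ u = 0 := by
    intro u hu
    rw [hφdef]
    apply Set.indicator_of_notMem
    simp only [Set.mem_Icc, not_and_or, not_le]
    rcases lt_abs.mp hu with h | h
    · right; linarith
    · left; linarith
  have hφ_val : ∀ u : ℝ, |u| ≤ 1/(n:ℝ) → φ u = (n:ℝ)/2 := by
    intro u hu
    rw [hφdef]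
    apply Set.indicator_of_mem
    rw [Set.mem_Icc]
    constructor <;> [linarith [neg_abs_le u]; linarith [le_abs_self u]]
  have hφ_nonneg : ∀ u : ℝ, 0 ≤ φ u := by
    intro u; rw [hφdef]
    exact Set.indicator_nonneg (fun _ _ => by positivity) u
  have hφ_le : ∀ u : ℝ, φ u ≤ (n:ℝ)/2 := by
    intro u; rw [hφdef]
    by_cases hu : u ∈ Set.Icc (-(1/(n:ℝ))) (1/(n:ℝ))
    · rw [Set.indicator_of_mem hu]
    · rw [Set.indicator_of_notMem hu]; positivity
  have hφ_meas : Measurable φ := Measurable.indicator measurable_const measurableSet_Icc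
  -- measurability of Kf
  have hKmeas : Measurable (fun p : ℝ × ℝ => Kf f φ p.1 p.2) := by
    unfold Kf
    apply Measurable.mul
    · exact ind01_meas.comp measurable_fst
    apply Measurable.mul
    · exact ind01_meas.comp (measurable_fst.add measurable_snd)
    apply Measurable.mul
    · apply Measurable.div
      · exact ((hcont.measurable.comp measurable_fst).sub
          (hcont.measurable.comp (measurable_fst.add measurable_snd))).abs
      · exact (measurable_fst.sub (measurable_fst.add measurable_snd)).abs
    · exact hφ_meas.comp (measurable_fst.sub (measurable_fst.add measurable_snd))
  -- pointwise bound
  have hbound : ∀ p : ℝ × ℝ, ‖Kf f φ p.1 p.2‖ ≤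
      (Set.Ioo (0:ℝ) 1).indicator (fun _ => (1:ℝ)) p.1 *
      (Set.Icc (-(1:ℝ)) 1).indicator (fun _ => L * ((n:ℝ)/2)) p.2 := by
    rintro ⟨x, h⟩
    dsimp only
    have hdivL : |f x - f (x+h)| / |x - (x+h)| ≤ L := by
      rcases eq_or_ne h 0 with rfl | hne
      · simp
        positivity
      · rw [div_le_iff₀ (by rw [show x - (x+h) = -h by ring, abs_neg]; exact abs_pos.mpr hne)]
        exact hLip x (x+h)
    have hdiv0 : 0 ≤ |f x - f (x+h)| / |x - (x+h)| := by positivity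
    have hK0 : 0 ≤ Kf f φ x h := by
      unfold Kf
      have := hφ_nonneg (x - (x+h))
      have := ind01_nonneg x
      have := ind01_nonneg (x+h)
      positivity
    rw [Real.norm_eq_abs, abs_of_nonneg hK0]
    by_cases hx : x ∈ Set.Ioo (0:ℝ) 1
    · by_cases hh : h ∈ Set.Icc (-(1:ℝ)) 1
      · rw [Set.indicator_of_mem hx, Set.indicator_of_mem hh, one_mul]
        unfold Kf
        calc ind01 x * (ind01 (x+h) * (|f x - f (x+h)| / |x - (x+h)| * φ (x - (x+h))))
            ≤ 1 * (1 * (L * ((n:ℝ)/2))) := by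
              apply mul_le_mul (ind01_le_one x) ?_ ?_ zero_le_one
              · apply mul_le_mul (ind01_le_one (x+h)) ?_ ?_ zero_le_one
                · exact mul_le_mul hdivL (hφ_le _) (hφ_nonneg _) hL
                · exact mul_nonneg hdiv0 (hφ_nonneg _)
              · apply mul_nonneg (ind01_nonneg _) (mul_nonneg hdiv0 (hφ_nonneg _))
          _ = L * ((n:ℝ)/2) := by ring
      · rw [Set.indicator_of_notMem hh, mul_zero]
        have habs : 1/(n:ℝ) < |x - (x+h)| := by
          rw [show x - (x+h) = -h by ring, abs_neg]
          simp only [Set.mem_Icc, not_and_or, not_le] at hh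
          rcases hh with h1 | h1
          · calc 1/(n:ℝ) ≤ 1/2 := hinv2
              _ < 1 := by norm_num
              _ < -h := by linarith
              _ ≤ |h| := neg_le_abs h
          · calc 1/(n:ℝ) ≤ 1/2 := hinv2
              _ < 1 := by norm_num
              _ < h := h1
              _ ≤ |h| := le_abs_self h
        unfold Kf
        rw [hφ_zero _ habs]
        ring_nf
        exact le_refl 0
    · rw [Set.indicator_of_notMem hx, zero_mul]
      unfold Kf
      rw [ind01_of_not_mem hx]
      ring_nf
      exact le_refl 0
  -- integrability of the bound
  have hg_int : Integrable (fun p : ℝ × ℝ =>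
      (Set.Ioo (0:ℝ) 1).indicator (fun _ => (1:ℝ)) p.1 *
      (Set.Icc (-(1:ℝ)) 1).indicator (fun _ => L * ((n:ℝ)/2)) p.2)
      (volume.prod volume) := by
    apply Integrable.mul_prod
    · rw [integrable_indicator_iff measurableSet_Ioo]
      apply (integrableOn_const_iff (by finiteness)).mpr
      right
      rw [Real.volume_Ioo]
      exact ENNReal.ofReal_lt_top
    · rw [integrable_indicator_iff measurableSet_Icc]
      apply (integrableOn_const_iff (by finiteness)).mpr
      right
      rw [Real.volume_Icc]
      exact ENNReal.ofReal_lt_top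
  have hQint : Integrable (Function.uncurry (Kf f φ)) (volume.prod volume) := by
    apply Integrable.mono' hg_int hKmeas.aestronglyMeasurable
    exact ae_of_all _ hbound
  -- Step 1: rewrite R1d as double integral of Kf
  have step1 : R1d φ f = ∫ x : ℝ, ∫ h : ℝ, Kf f φ x h := by
    unfold R1d
    have inner_eq : ∀ x ∈ Set.Ioo (0:ℝ) 1,
        (∫ y in Set.Ioo (0:ℝ) 1, |f x - f y| / |x - y| * φ (x - y))
          = ∫ h : ℝ, Kf f φ x h := by
      intro x hx
      have e1 : (∫ y in Set.Ioo (0:ℝ) 1, |f x - f y| / |x - y| * φ (x - y))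
          = ∫ y : ℝ, ind01 y * (|f x - f y| / |x - y| * φ (x - y)) := by
        rw [← MeasureTheory.integral_indicator measurableSet_Ioo]
        congr 1
        funext y
        by_cases hy : y ∈ Set.Ioo (0:ℝ) 1
        · rw [Set.indicator_of_mem hy, ind01_of_mem hy, one_mul]
        · rw [Set.indicator_of_notMem hy, ind01_of_not_mem hy, zero_mul]
      rw [e1, ← integral_add_left_eq_self
        (fun y => ind01 y * (|f x - f y| / |x - y| * φ (x - y))) x]
      congr 1
      funext h
      unfold Kf
      rw [ind01_of_mem hx, one_mul]
    calc (∫ x in Set.Ioo (0:ℝ) 1, ∫ y in Set.Ioo (0:ℝ) 1, |f x - f y| / |x - y| * φ (x - y))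
        = ∫ x in Set.Ioo (0:ℝ) 1, ∫ h : ℝ, Kf f φ x h :=
          setIntegral_congr_fun measurableSet_Ioo inner_eq
      _ = ∫ x : ℝ, ∫ h : ℝ, Kf f φ x h := by
          rw [← MeasureTheory.integral_indicator measurableSet_Ioo]
          congr 1
          funext x
          by_cases hx : x ∈ Set.Ioo (0:ℝ) 1
          · rw [Set.indicator_of_mem hx]
          · rw [Set.indicator_of_notMem hx]
            symm
            have : ∀ h : ℝ, Kf f φ x h = 0 := by
              intro h; unfold Kf; rw [ind01_of_not_mem hx, zero_mul]
            simp [this]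
  -- Step 2: Fubini
  have step2 : (∫ x : ℝ, ∫ h : ℝ, Kf f φ x h) = ∫ h : ℝ, ∫ x : ℝ, Kf f φ x h :=
    MeasureTheory.integral_integral_swap hQint
  set W : ℝ → ℝ := fun h => ∫ x : ℝ, Kf f φ x h with hWdef
  have hWint : Integrable W volume := by
    rw [hWdef]
    exact hQint.integral_prod_right
  -- W vanishes for |h| > 1/n
  have hWzero : ∀ h : ℝ, 1/(n:ℝ) < |h| → W h = 0 := by
    intro h hh
    rw [hWdef]
    have : ∀ x : ℝ, Kf f φ x h = 0 := by
      intro x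
      unfold Kf
      rw [show x - (x+h) = -h by ring, hφ_zero (-h) (by rwa [abs_neg]), mul_zero, mul_zero, mul_zero]
    simp [this]
  -- W is even
  have hWeven : ∀ h : ℝ, W (-h) = W h := by
    intro h
    rw [hWdef]
    dsimp only
    rw [← integral_add_right_eq_self (fun x => Kf f φ x (-h)) h]
    congr 1
    funext x
    unfold Kf
    rw [show x + h + -h = x by ring, show x + h - x = h by ring,
      show x - (x+h) = -h by ring, hφ_even, abs_neg, abs_sub_comm (f (x+h)) (f x)]
    ring
  -- restrict to Icc
  have step3 : (∫ h : ℝ, W h) = ∫ h in (-(1/(n:ℝ)))..(1/(n:ℝ)), W h := by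
    rw [intervalIntegral.integral_of_le (by linarith : -(1/(n:ℝ)) ≤ 1/(n:ℝ)),
      ← MeasureTheory.integral_Icc_eq_integral_Ioc,
      ← MeasureTheory.integral_indicator measurableSet_Icc]
    congr 1
    funext h
    by_cases hh : h ∈ Set.Icc (-(1/(n:ℝ))) (1/(n:ℝ))
    · rw [Set.indicator_of_mem hh]
    · rw [Set.indicator_of_notMem hh]
      refine hWzero h ?_
      simp only [Set.mem_Icc, not_and_or, not_le] at hh
      rcases hh with h1 | h1
      · rw [lt_abs]; right; linarith
      · rw [lt_abs]; left; exact h1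
  -- split and use evenness
  have step4 : (∫ h in (-(1/(n:ℝ)))..(1/(n:ℝ)), W h) = 2 * ∫ h in (0:ℝ)..(1/(n:ℝ)), W h := by
    rw [← intervalIntegral.integral_add_adjacent_intervals (a := -(1/(n:ℝ))) (b := 0)
      (c := 1/(n:ℝ)) (hWint.intervalIntegrable) (hWint.intervalIntegrable)]
    have : (∫ h in (-(1/(n:ℝ)))..(0:ℝ), W h) = ∫ h in (0:ℝ)..(1/(n:ℝ)), W h := by
      have e := intervalIntegral.integral_comp_neg (a := (0:ℝ)) (b := 1/(n:ℝ)) W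
      rw [neg_zero] at e
      rw [← e]
      apply intervalIntegral.integral_congr
      intro h _
      exact hWeven h
    rw [this]
    ring
  -- evaluate W on Ioc (0, 1/n]
  have hWval : ∀ h ∈ Set.Ioc (0:ℝ) (1/(n:ℝ)),
      W h = ((n:ℝ)/2)/h * ∫ x in (0:ℝ)..(1-h), |f (x+h) - f x| := by
    intro h hh
    obtain ⟨hh0, hh1⟩ := hh
    have hh2 : h < 1 := by linarith
    have e : ∀ x : ℝ, Kf f φ x h =
        (Set.Ioo (0:ℝ) (1-h)).indicator (fun _ => (1:ℝ)) x * (((n:ℝ)/2)/h * |f (x+h) - f x|) := by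
      intro x
      unfold Kf
      rw [show x - (x+h) = -h by ring, hφ_even, abs_neg, abs_of_pos hh0,
        hφ_val h (by rw [abs_of_pos hh0]; exact hh1), abs_sub_comm (f x) (f (x+h))]
      have hind : ind01 x * ind01 (x+h) = (Set.Ioo (0:ℝ) (1-h)).indicator (fun _ => (1:ℝ)) x := by
        by_cases h1 : x ∈ Set.Ioo (0:ℝ) (1-h)
        · obtain ⟨ha, hb⟩ := h1
          rw [Set.indicator_of_mem (by exact ⟨ha, hb⟩ : x ∈ Set.Ioo (0:ℝ) (1-h)),
            ind01_of_mem ⟨ha, by linarith⟩, ind01_of_mem ⟨by linarith, by linarith⟩, one_mul]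
        · rw [Set.indicator_of_notMem h1]
          simp only [Set.mem_Ioo, not_and_or, not_lt] at h1
          rcases h1 with h2 | h2
          · rw [ind01_of_not_mem (x := x)
              (by simp only [Set.mem_Ioo, not_and_or, not_lt]; left; exact h2), zero_mul]
          · rw [ind01_of_not_mem (x := x + h)
              (by simp only [Set.mem_Ioo, not_and_or, not_lt]; right; linarith), mul_zero]
      rw [← mul_assoc, hind]
      ring
    rw [hWdef]
    dsimp only
    calc (∫ x : ℝ, Kf f φ x h)
        = ∫ x : ℝ, (Set.Ioo (0:ℝ) (1-h)).indicator
            (fun _ => (1:ℝ)) x * (((n:ℝ)/2)/h * |f (x+h) - f x|) := by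
          congr 1; funext x; exact e x
      _ = ∫ x : ℝ, (Set.Ioo (0:ℝ) (1-h)).indicator
            (fun x => ((n:ℝ)/2)/h * |f (x+h) - f x|) x := by
          congr 1; funext x
          by_cases hx : x ∈ Set.Ioo (0:ℝ) (1-h)
          · rw [Set.indicator_of_mem hx, Set.indicator_of_mem hx, one_mul]
          · rw [Set.indicator_of_notMem hx, Set.indicator_of_notMem hx, zero_mul]
      _ = ∫ x in Set.Ioo (0:ℝ) (1-h), ((n:ℝ)/2)/h * |f (x+h) - f x| :=
          MeasureTheory.integral_indicator measurableSet_Ioo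
      _ = ((n:ℝ)/2)/h * ∫ x in Set.Ioo (0:ℝ) (1-h), |f (x+h) - f x| :=
          integral_const_mul _ _
      _ = ((n:ℝ)/2)/h * ∫ x in (0:ℝ)..(1-h), |f (x+h) - f x| := by
          rw [intervalIntegral.integral_of_le (by linarith : (0:ℝ) ≤ 1 - h),
            MeasureTheory.integral_Ioc_eq_integral_Ioo]
  -- final congruence on (0, 1/n]
  have step5 : (∫ h in (0:ℝ)..(1/(n:ℝ)), W h)
      = ∫ h in (0:ℝ)..(1/(n:ℝ)), ((n:ℝ)/2)/h * ∫ x in (0:ℝ)..(1-h), |f (x+h) - f x| := by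
    rw [intervalIntegral.integral_of_le hinv0.le, intervalIntegral.integral_of_le hinv0.le]
    exact setIntegral_congr_fun measurableSet_Ioc hWval
  rw [step1, step2]
  show (∫ h : ℝ, W h) = _
  rw [step3, step4, step5]

theorem stmt_18 (n : ℕ) (hn : 2 ≤ n) (a : ℕ → ℝ)
    (φn : ℝ → ℝ)
    (hφn : φn = Set.indicator (Set.Icc (-(1 / (n : ℝ))) (1 / (n : ℝ)))
      (fun _ => (n : ℝ) / 2))
    (g : ℕ → ℝ → ℝ) (hg : ∀ i, g i = fun x => max (1 - n * |x - (i : ℝ) / n|) 0)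
    (f : ℝ → ℝ) (hf : f = fun x => ∑ i ∈ Finset.range (n + 1), a i * g i x) :
    R1d φn f =
      (∑ i ∈ Finset.Icc 1 n, |a i - a (i - 1)| / 2) +
      ∑ i ∈ Finset.Icc 1 (n - 1),
        (if Real.sign (a (i - 1) - a i) = Real.sign (a i - a (i + 1)) then
          |a (i + 1) - a (i - 1)| / 4
        else
          ((a i - a (i - 1)) ^ 2 + (a i - a (i + 1)) ^ 2) /
            (4 * (|a i - a (i - 1)| + |a i - a (i + 1)|))) := by
  have hn0 : (0:ℝ) < n := by
    have : (0:ℕ) < n := by omega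
    exact_mod_cast this
  have hnne : (n:ℝ) ≠ 0 := ne_of_gt hn0
  have hn1 : 1 ≤ n := by omega
  have hinv0 : 0 < 1/(n:ℝ) := by positivity
  have hf' : f = fun x => ∑ i ∈ Finset.range (n+1), a i * max (1 - n * |x - (i:ℝ)/n|) 0 := by
    rw [hf]; funext x; exact Finset.sum_congr rfl (fun i _ => by rw [hg i])
  have hcont : Continuous f := by rw [hf']; exact fn_cont n a
  set L : ℝ := (n:ℝ) * ∑ i ∈ Finset.range (n+1), |a i| with hLdef
  have hL : 0 ≤ L := by
    rw [hLdef]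
    have : 0 ≤ ∑ i ∈ Finset.range (n+1), |a i| :=
      Finset.sum_nonneg (fun i _ => abs_nonneg _)
    positivity
  have hLip : ∀ x y : ℝ, |f x - f y| ≤ L * |x - y| := by
    intro x y; rw [hf', hLdef]; exact fn_lip n a x y
  have hfev : ∀ k : ℕ, 1 ≤ k → k ≤ n → ∀ x : ℝ, ((k:ℝ)-1)/n ≤ x → x ≤ (k:ℝ)/n →
      f x = a (k-1) + (n:ℝ)*(a k - a (k-1))*(x - ((k:ℝ)-1)/n) := by
    intro k hk1 hkn x h1 h2
    rw [hf']
    exact fn_eval n a k hk1 hkn x h1 h2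
  rw [hφn]
  rw [reduction n hn f hcont L hL hLip]
  set SA : ℝ := ∑ k ∈ Finset.Icc 1 n, |a k - a (k-1)| with hSAdef
  set SB : ℝ := ∑ k ∈ Finset.Icc 1 (n-1),
      (if Real.sign (a k - a (k-1)) = Real.sign (a (k+1) - a k)
        then |a k - a (k-1) + (a (k+1) - a k)| / 2
        else ((a k - a (k-1))^2 + (a (k+1) - a k)^2) /
          (2*(|a k - a (k-1)| + |a (k+1) - a k|))) with hSBdef
  have key1 : (∫ h in (0:ℝ)..(1/(n:ℝ)), ((n:ℝ)/2)/h * ∫ x in (0:ℝ)..(1-h), |f (x+h) - f x|)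
      = ∫ h in (0:ℝ)..(1/(n:ℝ)), (((n:ℝ)/2) * ((n:ℝ)*SA) * (1/(n:ℝ)) / (n:ℝ) * (n:ℝ)
          + (((n:ℝ)/2) * ((n:ℝ)*SB) - ((n:ℝ)/2) * ((n:ℝ)*SA)) * h) := by
    rw [intervalIntegral.integral_of_le hinv0.le, intervalIntegral.integral_of_le hinv0.le]
    apply setIntegral_congr_fun measurableSet_Ioc
    intro h hh
    obtain ⟨hh0, hh1⟩ := hh
    dsimp only
    rw [G_eval hn0 hn1 hcont hfev hh0 hh1]
    have e1 : (∑ k ∈ Finset.Icc 1 n, |(n:ℝ)*(a k - a (k-1))| * h * (1/(n:ℝ) - h))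
        = ((n:ℝ)*SA) * (h * (1/(n:ℝ) - h)) := by
      rw [hSAdef, Finset.mul_sum, Finset.sum_mul]
      apply Finset.sum_congr rfl
      intro k _
      rw [abs_mul, Nat.abs_cast]
      ring
    have e2 : (∑ k ∈ Finset.Icc 1 (n-1), h^2 * ∫ t in (0:ℝ)..1,
          |(n:ℝ)*(a k - a (k-1))*(1-t) + (n:ℝ)*(a (k+1) - a k)*t|)
        = h^2 * ((n:ℝ) * SB) := by
      rw [hSBdef, Finset.mul_sum, Finset.mul_sum]
      apply Finset.sum_congr rfl
      intro k _
      have eC : (∫ t in (0:ℝ)..1, |(n:ℝ)*(a k - a (k-1))*(1-t) + (n:ℝ)*(a (k+1) - a k)*t|)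
          = (n:ℝ) * ∫ t in (0:ℝ)..1, |(a k - a (k-1))*(1-t) + (a (k+1) - a k)*t| := by
        rw [← intervalIntegral.integral_const_mul]
        apply intervalIntegral.integral_congr
        intro t _
        dsimp only
        rw [show (n:ℝ)*(a k - a (k-1))*(1-t) + (n:ℝ)*(a (k+1) - a k)*t
            = (n:ℝ) * ((a k - a (k-1))*(1-t) + (a (k+1) - a k)*t) by ring, abs_mul,
            Nat.abs_cast]
      rw [eC, lemC]
    rw [e1, e2]
    field_simp
    ring
  rw [key1, integral_affine]
  have hgoal1 : (∑ i ∈ Finset.Icc 1 n, |a i - a (i-1)| / 2) = SA / 2 := by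
    rw [hSAdef, Finset.sum_div]
  have hgoal2 : (∑ i ∈ Finset.Icc 1 (n-1),
      (if Real.sign (a (i - 1) - a i) = Real.sign (a i - a (i + 1)) then
          |a (i + 1) - a (i - 1)| / 4
        else
          ((a i - a (i - 1)) ^ 2 + (a i - a (i + 1)) ^ 2) /
            (4 * (|a i - a (i - 1)| + |a i - a (i + 1)|)))) = SB / 2 := by
    rw [hSBdef, Finset.sum_div]
    apply Finset.sum_congr rfl
    intro k _
    have hsign : (Real.sign (a (k-1) - a k) = Real.sign (a k - a (k+1)))
        ↔ (Real.sign (a k - a (k-1)) = Real.sign (a (k+1) - a k)) := by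
      rw [show a (k-1) - a k = -(a k - a (k-1)) by ring,
        show a k - a (k+1) = -(a (k+1) - a k) by ring, Real.sign_neg, Real.sign_neg]
      exact neg_inj
    simp only [hsign]
    by_cases hc : Real.sign (a k - a (k-1)) = Real.sign (a (k+1) - a k)
    · rw [if_pos hc, if_pos hc,
        show a (k+1) - a (k-1) = a k - a (k-1) + (a (k+1) - a k) by ring]
      ring
    · rw [if_neg hc, if_neg hc]
      rw [show a k - a (k+1) = -(a (k+1) - a k) by ring, abs_neg, neg_sq]
      rw [div_div]
      congr 1
      ring
  rw [hgoal1, hgoal2]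
  field_simp
  ring
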